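/- Let f be a C² real function on an open interval I ⊆ (0,∞). Then f satisfies 4r³ f''(r) + f'(r)³ = 0 for all r ∈ I (equivalently, the surface of revolution t = f(√(x²+y²)) in the Heisenberg group is horizontally minimal, i.e., has horizontal mean curvature identically zero on I) if and only if there exist constants C, C′ ∈ ℝ such that for all r ∈ I one has C² < 16 r² and (f(r) − C′)² = (C²/64)(16 r² − C²). -/

import Mathlib

open Set

private lemma aux_const {F : ℝ → ℝ} {s : Set ℝ} (hs : s.OrdConnected)
    (h : ∀ x ∈ s, HasDerivAt F 0 x) :
    ∀ x ∈ s, ∀ y ∈ s, F x = F y := by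
  have key : ∀ x ∈ s, ∀ y ∈ s, x ≤ y → F y = F x := by
    intro x hx y hy hxy
    have hsub : Icc x y ⊆ s := hs.out hx hy
    have := constant_of_has_deriv_right_zero
      (f := F) (a := x) (b := y)
      (fun z hz => (h z (hsub hz)).continuousAt.continuousWithinAt)
      (fun z hz => ((h z (hsub (Ico_subset_Icc_self hz))).hasDerivWithinAt))
    exact this y (right_mem_Icc.2 hxy)
  intro x hx y hy
  rcases le_total x y with hxy | hxy
  · exact (key x hx y hy hxy).symm
  · exact key y hy x hx hxy

private lemma K_deriv {g : ℝ → ℝ} {r : ℝ} (hr : 0 < r) (hgr : g r ≠ 0)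
    (hd : HasDerivAt g (-(g r) ^ 3 / (4 * r ^ 3)) r) :
    HasDerivAt (fun x => ((g x) ^ 2)⁻¹ + ((4 : ℝ) * x ^ 2)⁻¹) 0 r := by
  have h1 : HasDerivAt (fun x => ((g x) ^ 2)⁻¹)
      (-(2 * g r ^ 1 * (-(g r) ^ 3 / (4 * r ^ 3))) / ((g r) ^ 2) ^ 2) r :=
    (hd.pow 2).inv (pow_ne_zero 2 hgr)
  have h2 : HasDerivAt (fun x : ℝ => ((4 : ℝ) * x ^ 2)⁻¹)
      (-(4 * (2 * r ^ 1)) / ((4 : ℝ) * r ^ 2) ^ 2) r := by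
    have : HasDerivAt (fun x : ℝ => (4 : ℝ) * x ^ 2) (4 * (2 * r ^ 1)) r :=
      (hasDerivAt_pow 2 r).const_mul 4
    exact this.inv (by positivity)
  have := h1.add h2
  refine this.congr_deriv ?_
  have hr' : r ≠ 0 := ne_of_gt hr
  field_simp
  ring

private lemma zero_propagate {a b : ℝ} (ha : 0 ≤ a) {g : ℝ → ℝ}
    (hgc : ContinuousOn g (Ioo a b))
    (hgd : ∀ r ∈ Ioo a b, HasDerivAt g (-(g r) ^ 3 / (4 * r ^ 3)) r)
    {r₀ : ℝ} (hr₀ : r₀ ∈ Ioo a b) (hz : g r₀ = 0) :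
    ∀ s ∈ Ioo a b, g s = 0 := by
  have hoc : (Ioo a b).OrdConnected := ordConnected_Ioo
  intro s hs
  by_contra hgs
  -- the function K = 1/g² + 1/(4r²)
  set K : ℝ → ℝ := fun x => ((g x) ^ 2)⁻¹ + ((4 : ℝ) * x ^ 2)⁻¹ with hK
  have hKs_pos : 0 < K s := by
    have hs0 : 0 < s := lt_of_le_of_lt ha hs.1
    have : 0 < ((g s) ^ 2)⁻¹ := by positivity
    have h2 : 0 < ((4 : ℝ) * s ^ 2)⁻¹ := by positivity
    simp only [hK]; linarith
  rcases lt_or_gt_of_ne (fun h : s = r₀ => hgs (h ▸ hz)) with hlt | hgt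
  · -- s < r₀ : let r* = inf of zeros in [s, r₀]
    set T : Set ℝ := Icc s r₀ ∩ g ⁻¹' {0} with hT
    have hsubI : Icc s r₀ ⊆ Ioo a b := hoc.out hs hr₀
    have hTne : T.Nonempty := ⟨r₀, ⟨hlt.le, le_refl _⟩, hz⟩
    have hTbdd : BddBelow T := ⟨s, fun x hx => hx.1.1⟩
    have hTcl : IsClosed T :=
      (hgc.mono hsubI).preimage_isClosed_of_isClosed isClosed_Icc isClosed_singleton
    set c := sInf T with hc
    have hcT : c ∈ T := hTcl.csInf_mem hTne hTbdd
    have hcI : c ∈ Ioo a b := hsubI hcT.1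
    have hgc0 : g c = 0 := hcT.2
    have hsc : s < c := by
      rcases lt_or_eq_of_le hcT.1.1 with h | h
      · exact h
      · exact absurd (h ▸ hgc0) hgs
    have hne : ∀ x ∈ Ico s c, g x ≠ 0 := by
      intro x hx hx0
      have hxT : x ∈ T := ⟨⟨hx.1, hx.2.le.trans hcT.1.2⟩, hx0⟩
      exact absurd (csInf_le hTbdd hxT) (not_le.2 hx.2)
    have hIcoI : Ico s c ⊆ Ioo a b := fun x hx =>
      hsubI ⟨hx.1, hx.2.le.trans hcT.1.2⟩
    have hKconst : ∀ x ∈ Ico s c, K x = K s := by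
      have := aux_const (F := K) (s := Ico s c) ordConnected_Ico
        (fun x hx => K_deriv (lt_of_le_of_lt ha (hIcoI hx).1) (hne x hx)
          (hgd x (hIcoI hx)))
      intro x hx
      exact this x hx s ⟨le_refl _, hsc⟩
    have hlb : ∀ x ∈ Ico s c, (K s)⁻¹ ≤ (g x) ^ 2 := by
      intro x hx
      have hx0 : 0 < x := lt_of_le_of_lt ha (hIcoI hx).1
      have h1 : ((g x) ^ 2)⁻¹ ≤ K s := by
        have := hKconst x hx
        have h2 : 0 < ((4 : ℝ) * x ^ 2)⁻¹ := by positivity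
        simp only [hK] at this ⊢
        linarith
      have hgx := hne x hx
      have hgx2 : 0 < (g x) ^ 2 := by positivity
      calc (K s)⁻¹ ≤ (((g x) ^ 2)⁻¹)⁻¹ :=
            inv_anti₀ (by positivity) h1
        _ = (g x) ^ 2 := inv_inv _
    -- continuity of g at c gives a contradiction
    have hcont : ContinuousAt (fun x => (g x) ^ 2) c :=
      ((hgc.continuousAt (isOpen_Ioo.mem_nhds hcI)).pow 2)
    have hev : ∀ᶠ x in nhds c, (g x) ^ 2 < (K s)⁻¹ := by
      have : (g c) ^ 2 < (K s)⁻¹ := by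
        rw [hgc0]
        norm_num
        exact hKs_pos
      exact hcont.eventually_lt_const this
    rw [Metric.eventually_nhds_iff] at hev
    obtain ⟨ε, hε, hball⟩ := hev
    set x := max s (c - ε / 2) with hx
    have hxmem : x ∈ Ico s c := by
      constructor
      · exact le_max_left _ _
      · exact max_lt hsc (by linarith)
    have hxd : dist x c < ε := by
      rw [Real.dist_eq, abs_lt]
      constructor
      · have : c - ε / 2 ≤ x := le_max_right _ _
        linarith
      · have : x < c := hxmem.2
        linarith
    exact absurd (hlb x hxmem) (not_le.2 (hball hxd))
  · -- r₀ < s : mirror, r* = sup of zeros in [r₀, s]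
    set T : Set ℝ := Icc r₀ s ∩ g ⁻¹' {0} with hT
    have hsubI : Icc r₀ s ⊆ Ioo a b := hoc.out hr₀ hs
    have hTne : T.Nonempty := ⟨r₀, ⟨le_refl _, hgt.le⟩, hz⟩
    have hTbdd : BddAbove T := ⟨s, fun x hx => hx.1.2⟩
    have hTcl : IsClosed T :=
      (hgc.mono hsubI).preimage_isClosed_of_isClosed isClosed_Icc isClosed_singleton
    set c := sSup T with hc
    have hcT : c ∈ T := hTcl.csSup_mem hTne hTbdd
    have hcI : c ∈ Ioo a b := hsubI hcT.1
    have hgc0 : g c = 0 := hcT.2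
    have hsc : c < s := by
      rcases lt_or_eq_of_le hcT.1.2 with h | h
      · exact h
      · exact absurd (h ▸ hgc0) hgs
    have hne : ∀ x ∈ Ioc c s, g x ≠ 0 := by
      intro x hx hx0
      have hxT : x ∈ T := ⟨⟨hcT.1.1.trans hx.1.le, hx.2⟩, hx0⟩
      exact absurd (le_csSup hTbdd hxT) (not_le.2 hx.1)
    have hIocI : Ioc c s ⊆ Ioo a b := fun x hx =>
      hsubI ⟨hcT.1.1.trans hx.1.le, hx.2⟩
    have hKconst : ∀ x ∈ Ioc c s, K x = K s := by
      have := aux_const (F := K) (s := Ioc c s) ordConnected_Ioc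
        (fun x hx => K_deriv (lt_of_le_of_lt ha (hIocI hx).1) (hne x hx)
          (hgd x (hIocI hx)))
      intro x hx
      exact this x hx s ⟨hsc, le_refl _⟩
    have hlb : ∀ x ∈ Ioc c s, (K s)⁻¹ ≤ (g x) ^ 2 := by
      intro x hx
      have hx0 : 0 < x := lt_of_le_of_lt ha (hIocI hx).1
      have h1 : ((g x) ^ 2)⁻¹ ≤ K s := by
        have := hKconst x hx
        have h2 : 0 < ((4 : ℝ) * x ^ 2)⁻¹ := by positivity
        simp only [hK] at this ⊢
        linarith
      have hgx := hne x hx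
      have hgx2 : 0 < (g x) ^ 2 := by positivity
      calc (K s)⁻¹ ≤ (((g x) ^ 2)⁻¹)⁻¹ :=
            inv_anti₀ (by positivity) h1
        _ = (g x) ^ 2 := inv_inv _
    have hcont : ContinuousAt (fun x => (g x) ^ 2) c :=
      ((hgc.continuousAt (isOpen_Ioo.mem_nhds hcI)).pow 2)
    have hev : ∀ᶠ x in nhds c, (g x) ^ 2 < (K s)⁻¹ := by
      have : (g c) ^ 2 < (K s)⁻¹ := by
        rw [hgc0]
        norm_num
        exact hKs_pos
      exact hcont.eventually_lt_const this
    rw [Metric.eventually_nhds_iff] at hev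
    obtain ⟨ε, hε, hball⟩ := hev
    set x := min s (c + ε / 2) with hx
    have hxmem : x ∈ Ioc c s := by
      constructor
      · exact lt_min hsc (by linarith)
      · exact min_le_left _ _
    have hxd : dist x c < ε := by
      rw [Real.dist_eq, abs_lt]
      constructor
      · have : c < x := hxmem.1
        linarith
      · have : x ≤ c + ε / 2 := min_le_right _ _
        linarith
    exact absurd (hlb x hxmem) (not_le.2 (hball hxd))

private lemma sign_const {a b : ℝ} {g : ℝ → ℝ} (hgc : ContinuousOn g (Ioo a b))
    (hne : ∀ r ∈ Ioo a b, g r ≠ 0) :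
    (∀ r ∈ Ioo a b, 0 < g r) ∨ (∀ r ∈ Ioo a b, g r < 0) := by
  by_contra hcon
  push_neg at hcon
  obtain ⟨⟨x, hx, hgx⟩, ⟨y, hy, hgy⟩⟩ := hcon
  have hgx' : g x < 0 := lt_of_le_of_ne hgx (hne x hx)
  have hgy' : 0 < g y := lt_of_le_of_ne hgy (Ne.symm (hne y hy))
  have hoc : (Ioo a b).OrdConnected := ordConnected_Ioo
  rcases le_total x y with hxy | hxy
  · have hsub : Icc x y ⊆ Ioo a b := hoc.out hx hy
    have h0 : (0 : ℝ) ∈ Icc (g x) (g y) := ⟨hgx'.le, hgy'.le⟩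
    obtain ⟨z, hz, hz0⟩ := intermediate_value_Icc hxy (hgc.mono hsub) h0
    exact hne z (hsub hz) hz0
  · have hsub : Icc y x ⊆ Ioo a b := hoc.out hy hx
    have h0 : (0 : ℝ) ∈ Icc (g x) (g y) := ⟨hgx'.le, hgy'.le⟩
    obtain ⟨z, hz, hz0⟩ := intermediate_value_Icc' hxy (hgc.mono hsub) h0
    exact hne z (hsub hz) hz0

set_option maxHeartbeats 1000000 in
theorem horizontally_minimal_revolution
    (a b : ℝ) (ha : 0 ≤ a) (f : ℝ → ℝ)
    (hf : ContDiffOn ℝ 2 f (Set.Ioo a b)) :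
    (∀ r ∈ Set.Ioo a b, 4 * r ^ 3 * deriv (deriv f) r + (deriv f r) ^ 3 = 0) ↔
      ∃ C C' : ℝ, ∀ r ∈ Set.Ioo a b,
        C ^ 2 < 16 * r ^ 2 ∧
        (f r - C') ^ 2 = (C ^ 2 / 64) * (16 * r ^ 2 - C ^ 2) := by
  have hfd : ∀ r ∈ Ioo a b, HasDerivAt f (deriv f r) r := fun r hr =>
    ((hf.differentiableOn two_ne_zero).differentiableAt
      (isOpen_Ioo.mem_nhds hr)).hasDerivAt
  have hg1 : ContDiffOn ℝ 1 (deriv f) (Ioo a b) :=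
    hf.deriv_of_isOpen isOpen_Ioo (by norm_num)
  have hgc : ContinuousOn (deriv f) (Ioo a b) := hg1.continuousOn
  have hgd : ∀ r ∈ Ioo a b, HasDerivAt (deriv f) (deriv (deriv f) r) r :=
    fun r hr => ((hg1.differentiableOn one_ne_zero).differentiableAt
      (isOpen_Ioo.mem_nhds hr)).hasDerivAt
  constructor
  · -- forward direction
    intro hmin
    by_cases hab : a < b
    swap
    · exact ⟨0, 0, fun r hr => absurd hr (by simp [Ioo_eq_empty hab])⟩
    have hm : (a + b) / 2 ∈ Ioo a b := ⟨by linarith, by linarith⟩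
    set m := (a + b) / 2 with hmdef
    have hode : ∀ r ∈ Ioo a b, HasDerivAt (deriv f) (-(deriv f r) ^ 3 / (4 * r ^ 3)) r := by
      intro r hr
      have h := hmin r hr
      have hr0 : (0:ℝ) < r := lt_of_le_of_lt ha hr.1
      have heq : deriv (deriv f) r = -(deriv f r) ^ 3 / (4 * r ^ 3) := by
        have h3 : (4:ℝ) * r ^ 3 ≠ 0 := by positivity
        field_simp
        linarith
      exact heq ▸ hgd r hr
    by_cases hex : ∃ r₀ ∈ Ioo a b, deriv f r₀ = 0
    · -- f' vanishes somewhere, hence everywhere; f is constant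
      obtain ⟨r₀, hr₀, h0⟩ := hex
      have hall := zero_propagate ha hgc hode hr₀ h0
      have hconst : ∀ x ∈ Ioo a b, ∀ y ∈ Ioo a b, f x = f y :=
        aux_const ordConnected_Ioo (fun x hx => hall x hx ▸ hfd x hx)
      refine ⟨0, f m, fun r hr => ⟨?_, ?_⟩⟩
      · have hr0 : (0:ℝ) < r := lt_of_le_of_lt ha hr.1
        norm_num
        positivity
      · rw [hconst r hr m hm]
        norm_num
    · push_neg at hex
      have hne : ∀ r ∈ Ioo a b, deriv f r ≠ 0 := hex
      -- K is constant on the interval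
      set K : ℝ → ℝ := fun x => ((deriv f x) ^ 2)⁻¹ + ((4 : ℝ) * x ^ 2)⁻¹ with hKdef
      have hKconst : ∀ x ∈ Ioo a b, K x = K m := by
        have := aux_const (F := K) ordConnected_Ioo
          (fun x hx => K_deriv (lt_of_le_of_lt ha hx.1) (hne x hx) (hode x hx))
        exact fun x hx => this x hx m hm
      have hm0 : (0:ℝ) < m := lt_of_le_of_lt ha hm.1
      have hgm := hne m hm
      have hKm : 0 < K m := by
        have h1 : 0 < ((deriv f m) ^ 2)⁻¹ := by positivity
        have h2 : 0 < ((4:ℝ) * m ^ 2)⁻¹ := by positivity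
        simp only [hKdef]
        linarith
      set σ : ℝ := if 0 < deriv f m then 1 else -1 with hσdef
      set C : ℝ := σ * (2 / Real.sqrt (K m)) with hCdef
      have hσ2 : σ ^ 2 = 1 := by
        simp only [hσdef]
        split <;> norm_num
      have hC2 : C ^ 2 = 4 / K m := by
        rw [hCdef, mul_pow, hσ2, one_mul, div_pow, Real.sq_sqrt hKm.le]
        norm_num
      -- pointwise facts
      have hKgt : ∀ r ∈ Ioo a b, ((4:ℝ) * r ^ 2)⁻¹ < K m := by
        intro r hr
        have hgr := hne r hr
        have h1 : 0 < ((deriv f r) ^ 2)⁻¹ := by positivity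
        have := hKconst r hr
        simp only [hKdef] at this
        linarith [this]
      have h16 : ∀ r ∈ Ioo a b, C ^ 2 < 16 * r ^ 2 := by
        intro r hr
        have hr0 : (0:ℝ) < r := lt_of_le_of_lt ha hr.1
        have h4 : (0:ℝ) < 4 * r ^ 2 := by positivity
        have h1 := mul_lt_mul_of_pos_left (hKgt r hr) h4
        rw [mul_inv_cancel₀ h4.ne'] at h1
        rw [hC2, div_lt_iff₀ hKm]
        nlinarith
      have hsq : ∀ r ∈ Ioo a b, (deriv f r) ^ 2 * (16 * r ^ 2 - C ^ 2) = (2 * C * r) ^ 2 := by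
        intro r hr
        have hr0 : (0:ℝ) < r := lt_of_le_of_lt ha hr.1
        have hgr := hne r hr
        have hrel : ((deriv f r) ^ 2)⁻¹ + ((4:ℝ) * r ^ 2)⁻¹ = K m := hKconst r hr
        have hrel2 : 4 * r ^ 2 + (deriv f r) ^ 2 = 4 * r ^ 2 * (deriv f r) ^ 2 * K m := by
          have hg2 : (deriv f r) ^ 2 ≠ 0 := pow_ne_zero 2 hgr
          have hr2 : ((4:ℝ) * r ^ 2) ≠ 0 := by positivity
          field_simp at hrel
          linarith
        have h4 : (2 * C * r) ^ 2 = 4 * C ^ 2 * r ^ 2 := by ring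
        rw [h4, hC2]
        field_simp
        nlinarith [hrel2]
      -- sign agreement
      have hsame : ∀ r ∈ Ioo a b, 0 < deriv f r * C := by
        have hsqrt : 0 < 2 / Real.sqrt (K m) := by positivity
        rcases sign_const hgc hne with hpos | hneg
        · intro r hr
          have hσ1 : σ = 1 := if_pos (hpos m hm)
          have hC : 0 < C := by rw [hCdef, hσ1, one_mul]; exact hsqrt
          exact mul_pos (hpos r hr) hC
        · intro r hr
          have hσ1 : σ = -1 := if_neg (not_lt.2 (hneg m hm).le)
          have hC : C < 0 := by rw [hCdef, hσ1]; nlinarith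
          exact mul_pos_of_neg_of_neg (hneg r hr) hC
      have hg_eq : ∀ r ∈ Ioo a b,
          deriv f r = 2 * C * r / Real.sqrt (16 * r ^ 2 - C ^ 2) := by
        intro r hr
        have hr0 : (0:ℝ) < r := lt_of_le_of_lt ha hr.1
        have hpos : 0 < 16 * r ^ 2 - C ^ 2 := by linarith [h16 r hr]
        set u := Real.sqrt (16 * r ^ 2 - C ^ 2) with hu
        have hu0 : 0 < u := Real.sqrt_pos.2 hpos
        have hu2 : u ^ 2 = 16 * r ^ 2 - C ^ 2 := Real.sq_sqrt hpos.le
        have hsq2 : (deriv f r * u) ^ 2 = (2 * C * r) ^ 2 := by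
          rw [mul_pow, hu2]
          exact hsq r hr
        rcases sq_eq_sq_iff_eq_or_eq_neg.1 hsq2 with h | h
        · rw [eq_div_iff hu0.ne']
          exact h
        · exfalso
          have h1 := mul_pos (hsame r hr) hu0
          have hCne : C ≠ 0 := by
            intro h0
            have h2 := hsame r hr
            rw [h0, mul_zero] at h2
            exact lt_irrefl 0 h2
          have hC2' : 0 < C ^ 2 := by positivity
          nlinarith [mul_pos hC2' hr0]
      -- the comparison function F
      set F : ℝ → ℝ := fun x => (C / 8) * Real.sqrt (16 * x ^ 2 - C ^ 2) with hFdef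
      have hF' : ∀ r ∈ Ioo a b,
          HasDerivAt F (2 * C * r / Real.sqrt (16 * r ^ 2 - C ^ 2)) r := by
        intro r hr
        have hpos : 0 < 16 * r ^ 2 - C ^ 2 := by linarith [h16 r hr]
        have hinner : HasDerivAt (fun x : ℝ => 16 * x ^ 2 - C ^ 2) (32 * r) r := by
          have := ((hasDerivAt_pow 2 r).const_mul (16:ℝ)).sub_const (C ^ 2)
          refine this.congr_deriv (Eq.symm ?_)
          ring
        have hsq' := hinner.sqrt hpos.ne'
        have := hsq'.const_mul (C / 8)
        refine this.congr_deriv (Eq.symm ?_)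
        have hu0 : Real.sqrt (16 * r ^ 2 - C ^ 2) ≠ 0 :=
          (Real.sqrt_pos.2 hpos).ne'
        field_simp
        ring
      have hdiff0 : ∀ r ∈ Ioo a b, HasDerivAt (fun x => f x - F x) 0 r := by
        intro r hr
        have := (hfd r hr).sub (hF' r hr)
        rw [hg_eq r hr, sub_self] at this
        exact this
      have hc' := aux_const (F := fun x => f x - F x) ordConnected_Ioo hdiff0
      refine ⟨C, f m - F m, fun r hr => ⟨h16 r hr, ?_⟩⟩
      have hFr : f r - (f m - F m) = F r := by
        have h2 : f r - F r = f m - F m := hc' r hr m hm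
        linarith
      rw [hFr, hFdef]
      have hpos : 0 < 16 * r ^ 2 - C ^ 2 := by linarith [h16 r hr]
      simp only
      rw [mul_pow, Real.sq_sqrt hpos.le]
      ring
  · -- backward direction
    rintro ⟨C, C', hC⟩ r hr
    have hr0 : (0:ℝ) < r := lt_of_le_of_lt ha hr.1
    by_cases hC0 : C = 0
    · -- f is constant
      subst hC0
      have hfc : ∀ s ∈ Ioo a b, f s = C' := by
        intro s hs
        have := (hC s hs).2
        norm_num at this
        linarith [sq_nonneg (f s - C'), this, abs_eq_zero.1 (by nlinarith [sq_abs (f s - C')] : |f s - C'| = 0)]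
      have hderiv1 : ∀ s ∈ Ioo a b, deriv f s = 0 := by
        intro s hs
        have hev : f =ᶠ[nhds s] fun _ => C' :=
          Filter.eventuallyEq_of_mem (isOpen_Ioo.mem_nhds hs) hfc
        rw [hev.deriv_eq, deriv_const]
      have hev2 : deriv f =ᶠ[nhds r] fun _ => (0:ℝ) :=
        Filter.eventuallyEq_of_mem (isOpen_Ioo.mem_nhds hr) hderiv1
      rw [hev2.deriv_eq, deriv_const, hderiv1 r hr]
      ring
    · -- C ≠ 0
      have hfne : ∀ s ∈ Ioo a b, f s - C' ≠ 0 := by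
        intro s hs h0
        have h1 := (hC s hs).1
        have h2 := (hC s hs).2
        rw [h0] at h2
        have : 0 < C ^ 2 := by positivity
        nlinarith
      have hcontu : ContinuousOn (fun s => f s - C') (Ioo a b) :=
        (hf.continuousOn).sub continuousOn_const
      -- constant sign of f - C'
      have habs : ∀ s ∈ Ioo a b,
          (f s - C') ^ 2 = ((|C| / 8) * Real.sqrt (16 * s ^ 2 - C ^ 2)) ^ 2 := by
        intro s hs
        have h1 := (hC s hs).1
        have hpos : 0 ≤ 16 * s ^ 2 - C ^ 2 := by linarith
        rw [mul_pow, Real.sq_sqrt hpos, div_pow, sq_abs]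
        rw [(hC s hs).2]
        ring
      obtain ⟨D, hD2, hfG⟩ :
          ∃ D : ℝ, D ^ 2 = C ^ 2 ∧ ∀ s ∈ Ioo a b,
            f s = C' + (D / 8) * Real.sqrt (16 * s ^ 2 - C ^ 2) := by
        rcases sign_const hcontu hfne with hp | hn
        · refine ⟨|C|, sq_abs C, fun s hs => ?_⟩
          have h1 := (hC s hs).1
          have hposx : 0 < 16 * s ^ 2 - C ^ 2 := by linarith
          have hrhs : 0 < (|C| / 8) * Real.sqrt (16 * s ^ 2 - C ^ 2) := by
            have : 0 < |C| := abs_pos.2 hC0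
            have := Real.sqrt_pos.2 hposx
            positivity
          rcases sq_eq_sq_iff_eq_or_eq_neg.1 (habs s hs) with h | h
          · linarith [h]
          · exfalso; have := hp s hs; nlinarith [h]
        · refine ⟨-|C|, by rw [neg_sq, sq_abs], fun s hs => ?_⟩
          have h1 := (hC s hs).1
          have hposx : 0 < 16 * s ^ 2 - C ^ 2 := by linarith
          have hrhs : 0 < (|C| / 8) * Real.sqrt (16 * s ^ 2 - C ^ 2) := by
            have : 0 < |C| := abs_pos.2 hC0
            have := Real.sqrt_pos.2 hposx
            positivity
          rcases sq_eq_sq_iff_eq_or_eq_neg.1 (habs s hs) with h | h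
          · exfalso; have := hn s hs; nlinarith [h]
          · linear_combination h
      -- the explicit solution G and its derivatives
      have hG' : ∀ s ∈ Ioo a b,
          HasDerivAt (fun x => C' + (D / 8) * Real.sqrt (16 * x ^ 2 - C ^ 2))
            (2 * D * s / Real.sqrt (16 * s ^ 2 - C ^ 2)) s := by
        intro s hs
        have h1 := (hC s hs).1
        have hposx : 0 < 16 * s ^ 2 - C ^ 2 := by linarith
        have hinner : HasDerivAt (fun x : ℝ => 16 * x ^ 2 - C ^ 2) (32 * s) s := by
          have := ((hasDerivAt_pow 2 s).const_mul (16:ℝ)).sub_const (C ^ 2)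
          refine this.congr_deriv (Eq.symm ?_)
          ring
        have hsq' := hinner.sqrt hposx.ne'
        have h2 := (hsq'.const_mul (D / 8)).const_add C'
        refine h2.congr_deriv (Eq.symm ?_)
        have hu0 : Real.sqrt (16 * s ^ 2 - C ^ 2) ≠ 0 :=
          (Real.sqrt_pos.2 hposx).ne'
        field_simp
        ring
      have hφ' : ∀ s ∈ Ioo a b,
          HasDerivAt (fun x => 2 * D * x / Real.sqrt (16 * x ^ 2 - C ^ 2))
            (-2 * D * C ^ 2 / (Real.sqrt (16 * s ^ 2 - C ^ 2)) ^ 3) s := by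
        intro s hs
        have h1 := (hC s hs).1
        have hposx : 0 < 16 * s ^ 2 - C ^ 2 := by linarith
        have hu0 : 0 < Real.sqrt (16 * s ^ 2 - C ^ 2) := Real.sqrt_pos.2 hposx
        have hu2 : (Real.sqrt (16 * s ^ 2 - C ^ 2)) ^ 2 = 16 * s ^ 2 - C ^ 2 :=
          Real.sq_sqrt hposx.le
        have hinner : HasDerivAt (fun x : ℝ => 16 * x ^ 2 - C ^ 2) (32 * s) s := by
          have := ((hasDerivAt_pow 2 s).const_mul (16:ℝ)).sub_const (C ^ 2)
          refine this.congr_deriv (Eq.symm ?_)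
          ring
        have hnum : HasDerivAt (fun x : ℝ => 2 * D * x) (2 * D) s := by
          simpa using (hasDerivAt_id s).const_mul (2 * D)
        have hden := hinner.sqrt hposx.ne'
        have hdiv := hnum.div hden hu0.ne'
        refine hdiv.congr_deriv (Eq.symm ?_)
        field_simp
        linear_combination (-2 * D) * hu2
      -- transfer derivatives from G to f
      have hdf : ∀ s ∈ Ioo a b,
          deriv f s = 2 * D * s / Real.sqrt (16 * s ^ 2 - C ^ 2) := by
        intro s hs
        have hev : f =ᶠ[nhds s] fun x => C' + (D / 8) * Real.sqrt (16 * x ^ 2 - C ^ 2) :=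
          Filter.eventuallyEq_of_mem (isOpen_Ioo.mem_nhds hs) hfG
        rw [hev.deriv_eq, (hG' s hs).deriv]
      have hev2 : deriv f =ᶠ[nhds r]
          fun x => 2 * D * x / Real.sqrt (16 * x ^ 2 - C ^ 2) :=
        Filter.eventuallyEq_of_mem (isOpen_Ioo.mem_nhds hr) hdf
      have hddf : deriv (deriv f) r
          = -2 * D * C ^ 2 / (Real.sqrt (16 * r ^ 2 - C ^ 2)) ^ 3 := by
        rw [hev2.deriv_eq, (hφ' r hr).deriv]
      rw [hddf, hdf r hr]
      have h1 := (hC r hr).1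
      have hposx : 0 < 16 * r ^ 2 - C ^ 2 := by linarith
      have hu0 : 0 < Real.sqrt (16 * r ^ 2 - C ^ 2) := Real.sqrt_pos.2 hposx
      have hu2 : (Real.sqrt (16 * r ^ 2 - C ^ 2)) ^ 2 = 16 * r ^ 2 - C ^ 2 :=
        Real.sq_sqrt hposx.le
      rw [div_pow, mul_div_assoc', ← add_div, div_eq_zero_iff]
      left
      linear_combination (8 * r ^ 3 * D) * hD2
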